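/- arXiv:2001.00274 — 2 statements merged into one kernel-verified Lean document; each statement's English description precedes it below -/
import Mathlib

section
/- Let d ≥ 1 and let A ⊆ ℤ^d be a finite nonempty set. Let X = A^{ℤ^d} be the compact topological space of all functions ω : ℤ^d → A with the product topology (A carrying the discrete topology), and for m ∈ ℤ^d let σ_m : X → X be the shift (σ_m ω)(n) = ω(n + m). Let μ be a Borel probability measure on X that is invariant under σ_m for every m ∈ ℤ^d. If for μ-almost every ω ∈ X the map n ↦ n + ω(n) from ℤ^d to ℤ^d is injective, then for μ-almost every ω ∈ X the map n ↦ n + ω(n) is a bijection of ℤ^d. -/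
open MeasureTheory

/-- `ℤ^d`. -/
abbrev Zd (d : ℕ) := Fin d → ℤ

/-- if `μ` is a shift-invariant probability measure on `X = A^{ℤ^d}`
(for a finite nonempty `A ⊆ ℤ^d`) such that `μ`-almost every `ω` encodes an injective
restricted function `n ↦ n + ω(n)`, then `μ`-almost every `ω` encodes a bijection
(i.e. a restricted permutation) of `ℤ^d`. -/
theorem ae_injective_implies_ae_bijective
    (d : ℕ) (hd : 1 ≤ d) (A : Set (Zd d)) (hA : A.Finite) (hne : A.Nonempty)
    (μ : Measure (Zd d → ↥A)) [IsProbabilityMeasure μ]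
    (hinv : ∀ m : Zd d,
      MeasurePreserving (fun ω : Zd d → ↥A => fun n : Zd d => ω (n + m)) μ μ)
    (hinj : ∀ᵐ ω ∂μ, Function.Injective (fun n : Zd d => n + (ω n : Zd d))) :
    ∀ᵐ ω ∂μ, Function.Bijective (fun n : Zd d => n + (ω n : Zd d)) := by
  haveI : Fintype ↥A := hA.fintype
  have hmeas_ev : ∀ (n : Zd d) (a : ↥A), MeasurableSet {ω : Zd d → ↥A | ω n = a} := by
    intro n a
    have : {ω : Zd d → ↥A | ω n = a} = (fun ω : Zd d → ↥A => ω n) ⁻¹' {a} := rfl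
    rw [this]
    exact measurable_pi_apply n (MeasurableSet.singleton a)
  set I : Set (Zd d → ↥A) :=
    {ω | Function.Injective (fun n : Zd d => n + (ω n : Zd d))} with hIdef
  have hImeas : MeasurableSet I := by
    have h1 : ∀ n k : Zd d,
        MeasurableSet {ω : Zd d → ↥A | n + (ω n : Zd d) = k + (ω k : Zd d) → n = k} := by
      intro n k
      have : {ω : Zd d → ↥A | n + (ω n : Zd d) = k + (ω k : Zd d) → n = k} =
          (fun ω : Zd d → ↥A => (ω n, ω k)) ⁻¹'
            {p : ↥A × ↥A | n + (p.1 : Zd d) = k + (p.2 : Zd d) → n = k} := rfl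
      rw [this]
      exact ((measurable_pi_apply n).prodMk (measurable_pi_apply k))
        ((Set.to_countable _).measurableSet)
    have : I = ⋂ n : Zd d, ⋂ k : Zd d,
        {ω : Zd d → ↥A | n + (ω n : Zd d) = k + (ω k : Zd d) → n = k} := by
      ext ω; simp [hIdef, Function.Injective]
    rw [this]
    exact MeasurableSet.iInter fun n => MeasurableSet.iInter fun k => h1 n k
  have hIc : μ Iᶜ = 0 := by
    have := ae_iff.mp hinj
    simpa [hIdef, Set.compl_setOf] using this
  -- key: for each m, a.e. ω has m in the range
  have key : ∀ m : Zd d, ∀ᵐ ω ∂μ, ∃ n : Zd d, n + (ω n : Zd d) = m := by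
    intro m
    set E : ↥A → Set (Zd d → ↥A) := fun a => {ω | ω (m - (a : Zd d)) = a} with hEdef
    set D : ↥A → Set (Zd d → ↥A) := fun a => E a ∩ I with hDdef
    have hEmeas : ∀ a, MeasurableSet (E a) := fun a => hmeas_ev _ a
    have hDmeas : ∀ a, MeasurableSet (D a) := fun a => (hEmeas a).inter hImeas
    have hdisj : Pairwise (Function.onFun Disjoint D) := by
      intro a b hab
      rw [Function.onFun, Set.disjoint_left]
      rintro ω ⟨ha, hInj⟩ ⟨hb, -⟩
      apply hab
      have h1 : (m - (a : Zd d)) + ((ω (m - (a : Zd d)) : Zd d)) = m := by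
        rw [ha]; exact sub_add_cancel m (a : Zd d)
      have h2 : (m - (b : Zd d)) + ((ω (m - (b : Zd d)) : Zd d)) = m := by
        rw [hb]; exact sub_add_cancel m (b : Zd d)
      have := hInj (h1.trans h2.symm)
      have : (a : Zd d) = b := by
        have := sub_right_injective this
        exact this
      exact Subtype.ext this
    -- μ (E a) = μ {ω | ω 0 = a}
    have hEeq : ∀ a : ↥A, μ (E a) = μ {ω : Zd d → ↥A | ω 0 = a} := by
      intro a
      have hp := (hinv (m - (a : Zd d))).measure_preimage (hmeas_ev 0 a).nullMeasurableSet
      have : (fun ω : Zd d → ↥A => fun n : Zd d => ω (n + (m - (a : Zd d)))) ⁻¹'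
          {ω : Zd d → ↥A | ω 0 = a} = E a := by
        ext ω; simp [hEdef, zero_add]
      rwa [this] at hp
    -- sum of μ {ω 0 = a} over a is 1
    have hsum : (∑ a : ↥A, μ {ω : Zd d → ↥A | ω 0 = a}) = 1 := by
      have hcover : (⋃ a : ↥A, {ω : Zd d → ↥A | ω 0 = a}) = Set.univ := by
        ext ω; simp
      have hdisj0 : Pairwise (Function.onFun Disjoint
          (fun a : ↥A => {ω : Zd d → ↥A | ω 0 = a})) := by
        intro a b hab
        rw [Function.onFun, Set.disjoint_left]
        rintro ω ha hb
        exact hab (ha.symm.trans hb)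
      have := measure_iUnion (μ := μ) hdisj0 (fun a => hmeas_ev 0 a)
      rw [hcover, measure_univ] at this
      exact (tsum_fintype _).symm.trans this.symm
    have hDeq : ∀ a, μ (D a) = μ (E a) := by
      intro a
      have h1 : μ (E a ∩ I) + μ (E a \ I) = μ (E a) := measure_inter_add_diff _ hImeas
      have h2 : μ (E a \ I) = 0 :=
        measure_mono_null (Set.diff_subset_compl _ _) hIc
      rw [h2, add_zero] at h1
      exact h1
    have hDsum : μ (⋃ a : ↥A, D a) = 1 := by
      rw [measure_iUnion hdisj hDmeas, tsum_fintype]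
      simp_rw [hDeq, hEeq]
      exact hsum
    have hsubset : (⋃ a : ↥A, D a) ⊆ {ω : Zd d → ↥A | ∃ n : Zd d, n + (ω n : Zd d) = m} := by
      rintro ω hω
      obtain ⟨a, ha, -⟩ := Set.mem_iUnion.1 hω
      refine ⟨m - (a : Zd d), ?_⟩
      rw [show ω (m - (a : Zd d)) = a from ha]
      exact sub_add_cancel m (a : Zd d)
    have hcompl : μ (⋃ a : ↥A, D a)ᶜ = 0 := by
      rw [prob_compl_eq_zero_iff (MeasurableSet.iUnion hDmeas)]
      exact hDsum
    rw [ae_iff]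
    exact measure_mono_null (fun ω hω => Set.mem_compl fun h => hω (hsubset h)) hcompl
  have hsurj : ∀ᵐ ω ∂μ, ∀ m : Zd d, ∃ n : Zd d, n + (ω n : Zd d) = m :=
    ae_all_iff.2 key
  filter_upwards [hinj, hsurj] with ω h1 h2
  exact ⟨h1, fun m => h2 m⟩
end

section
/- Let d ≥ 1 and let A ⊆ ℤ^d be a finite nonempty set. Let X = A^{ℤ^d} be the compact topological space of all functions ω : ℤ^d → A with the product topology (A carrying the discrete topology), and for m ∈ ℤ^d let σ_m : X → X be the shift (σ_m ω)(n) = ω(n + m). Let μ be a Borel probability measure on X that is invariant under σ_m for every m ∈ ℤ^d. If for μ-almost every ω ∈ X the map n ↦ n + ω(n) from ℤ^d to ℤ^d is surjective, then for μ-almost every ω ∈ X the map n ↦ n + ω(n) is a bijection of ℤ^d. -/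
open MeasureTheory

/-- if `μ` is a shift-invariant probability measure on `X = A^{ℤ^d}`
(for a finite nonempty `A ⊆ ℤ^d`) such that `μ`-almost every `ω` encodes a surjective
restricted function `n ↦ n + ω(n)`, then `μ`-almost every `ω` encodes a bijection
(i.e. a restricted permutation) of `ℤ^d`. -/
theorem ae_surjective_implies_ae_bijective
    (d : ℕ) (hd : 1 ≤ d) (A : Set (Zd d)) (hA : A.Finite) (hne : A.Nonempty)
    (μ : Measure (Zd d → ↥A)) [IsProbabilityMeasure μ]
    (hinv : ∀ m : Zd d,
      MeasurePreserving (fun ω : Zd d → ↥A => fun n : Zd d => ω (n + m)) μ μ)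
    (hsurj : ∀ᵐ ω ∂μ, Function.Surjective (fun n : Zd d => n + (ω n : Zd d))) :
    ∀ᵐ ω ∂μ, Function.Bijective (fun n : Zd d => n + (ω n : Zd d)) := by
  classical
  set F : Finset (Zd d) := hA.toFinset with hF
  -- measurability of basic events
  have hS : ∀ a : Zd d, MeasurableSet {ω : Zd d → ↥A | (ω (-a) : Zd d) = a} := by
    intro a
    have : {ω : Zd d → ↥A | (ω (-a) : Zd d) = a}
        = (fun ω : Zd d → ↥A => (ω (-a) : Zd d)) ⁻¹' {a} := rfl
    rw [this]
    exact ((measurable_subtype_coe).comp (measurable_pi_apply _)) (measurableSet_singleton a)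
  have hS0 : ∀ a : Zd d, MeasurableSet {ω : Zd d → ↥A | (ω 0 : Zd d) = a} := by
    intro a
    have : {ω : Zd d → ↥A | (ω 0 : Zd d) = a}
        = (fun ω : Zd d → ↥A => (ω 0 : Zd d)) ⁻¹' {a} := rfl
    rw [this]
    exact ((measurable_subtype_coe).comp (measurable_pi_apply _)) (measurableSet_singleton a)
  -- the counting function: number of preimages of 0 under n ↦ n + ω n
  set c : (Zd d → ↥A) → ENNReal :=
    fun ω => ∑ a ∈ F, if (ω (-a) : Zd d) = a then (1 : ENNReal) else 0 with hc
  have hcmeas : Measurable c := by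
    apply Finset.measurable_sum
    intro a _
    exact Measurable.ite (hS a) measurable_const measurable_const
  -- shift invariance of the events
  have hshift : ∀ a : Zd d,
      μ {ω : Zd d → ↥A | (ω (-a) : Zd d) = a} = μ {ω : Zd d → ↥A | (ω 0 : Zd d) = a} := by
    intro a
    have h := (hinv (-a)).measure_preimage (hS0 a).nullMeasurableSet
    have hpre : (fun ω : Zd d → ↥A => fun n : Zd d => ω (n + (-a))) ⁻¹'
        {ω : Zd d → ↥A | (ω 0 : Zd d) = a} = {ω : Zd d → ↥A | (ω (-a) : Zd d) = a} := by
      ext ω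
      simp [Set.mem_preimage, zero_add]
    rw [hpre] at h
    exact h
  -- total mass of the events at 0 is 1
  have hsum1 : ∑ a ∈ F, μ {ω : Zd d → ↥A | (ω 0 : Zd d) = a} = 1 := by
    have hdisj : (F : Set (Zd d)).PairwiseDisjoint
        (fun a => {ω : Zd d → ↥A | (ω 0 : Zd d) = a}) := by
      intro a _ b _ hab
      refine Set.disjoint_left.2 ?_
      intro ω ha hb
      exact hab (ha ▸ hb ▸ rfl)
    have hunion : (⋃ a ∈ F, {ω : Zd d → ↥A | (ω 0 : Zd d) = a}) = Set.univ := by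
      ext ω
      simp only [Set.mem_iUnion, Set.mem_univ, iff_true]
      exact ⟨(ω 0 : Zd d), by simp [hF, hA.mem_toFinset, (ω 0).2], rfl⟩
    have := measure_biUnion_finset (μ := μ) hdisj (fun a _ => hS0 a)
    rw [hunion] at this
    rw [← this, measure_univ]
  -- the integral of c equals 1
  have hint : ∫⁻ ω, c ω ∂μ = 1 := by
    rw [hc]
    rw [lintegral_finset_sum _ (fun a _ => Measurable.ite (hS a) measurable_const measurable_const)]
    have : ∀ a ∈ F, (∫⁻ ω, (if (ω (-a) : Zd d) = a then (1 : ENNReal) else 0) ∂μ)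
        = μ {ω : Zd d → ↥A | (ω (-a) : Zd d) = a} := by
      intro a _
      rw [← lintegral_indicator_one (hS a)]
      congr 1
      ext ω
      simp [Set.indicator_apply]
    rw [Finset.sum_congr rfl this]
    rw [Finset.sum_congr rfl (fun a _ => hshift a)]
    exact hsum1
  -- almost everywhere c ≥ 1, by surjectivity
  have hge : ∀ᵐ ω ∂μ, 1 ≤ c ω := by
    filter_upwards [hsurj] with ω hω
    obtain ⟨n, hn⟩ := hω 0
    simp only at hn
    set a : Zd d := (ω n : Zd d) with ha
    have haF : a ∈ F := by simp [hF, hA.mem_toFinset, (ω n).2, ha]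
    have hna : n = -a := by
      have : n + a = 0 := hn
      linear_combination (norm := abel) this
    have hterm : (if (ω (-a) : Zd d) = a then (1 : ENNReal) else 0) = 1 := by
      rw [← hna]
      simp [ha]
    calc (1 : ENNReal) = (if (ω (-a) : Zd d) = a then (1 : ENNReal) else 0) := hterm.symm
      _ ≤ c ω :=
        Finset.single_le_sum
          (f := fun b => if (ω (-b) : Zd d) = b then (1 : ENNReal) else 0)
          (fun b _ => zero_le) haF
  -- hence c = 1 almost everywhere
  have heq1 : ∀ᵐ ω ∂μ, c ω = 1 := by
    have hsub : ∫⁻ ω, (c ω - 1) ∂μ = 0 := by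
      rw [lintegral_sub' measurable_const.aemeasurable (by simp) hge]
      simp [hint]
    have := (lintegral_eq_zero_iff' (hcmeas.aemeasurable.sub measurable_const.aemeasurable)).1 hsub
    filter_upwards [this, hge] with ω h0 h1
    have : c ω ≤ 1 := tsub_eq_zero_iff_le.1 h0
    exact le_antisymm this h1
  -- injectivity over 0 almost everywhere
  have hgood : ∀ᵐ ω ∂μ, ∀ n1 n2 : Zd d,
      n1 + (ω n1 : Zd d) = 0 → n2 + (ω n2 : Zd d) = 0 → n1 = n2 := by
    filter_upwards [heq1] with ω h1
    intro n1 n2 e1 e2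
    by_contra hne'
    set a1 : Zd d := (ω n1 : Zd d) with ha1
    set a2 : Zd d := (ω n2 : Zd d) with ha2
    have hn1 : n1 = -a1 := by linear_combination (norm := abel) e1
    have hn2 : n2 = -a2 := by linear_combination (norm := abel) e2
    have ha12 : a1 ≠ a2 := fun h => hne' (by rw [hn1, hn2, h])
    have haF1 : a1 ∈ F := by simp [hF, hA.mem_toFinset, (ω n1).2, ha1]
    have haF2 : a2 ∈ F := by simp [hF, hA.mem_toFinset, (ω n2).2, ha2]
    have hsub : {a1, a2} ⊆ F := by
      intro x hx
      rcases Finset.mem_insert.1 hx with h | h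
      · exact h ▸ haF1
      · exact (Finset.mem_singleton.1 h) ▸ haF2
    have h2le : (2 : ENNReal) ≤ c ω := by
      have hpair : ∑ a ∈ ({a1, a2} : Finset (Zd d)),
          (if (ω (-a) : Zd d) = a then (1 : ENNReal) else 0) = 2 := by
        rw [Finset.sum_pair ha12]
        rw [← hn1, ← hn2]
        simp [ha1, ha2]
        norm_num
      calc (2 : ENNReal) = _ := hpair.symm
        _ ≤ c ω := Finset.sum_le_sum_of_subset hsub
    rw [h1] at h2le
    norm_num at h2le
  -- transfer to all m by shift invariance
  have hm : ∀ m : Zd d, ∀ᵐ ω ∂μ, ∀ n1 n2 : Zd d,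
      n1 + (ω n1 : Zd d) = m → n2 + (ω n2 : Zd d) = m → n1 = n2 := by
    intro m
    have := (hinv m).quasiMeasurePreserving.ae hgood
    filter_upwards [this] with ω hω
    intro n1 n2 e1 e2
    have h1 : (n1 - m) + ((fun n : Zd d => ω (n + m)) (n1 - m) : Zd d) = 0 := by
      simp only [sub_add_cancel]
      linear_combination (norm := abel) e1
    have h2 : (n2 - m) + ((fun n : Zd d => ω (n + m)) (n2 - m) : Zd d) = 0 := by
      simp only [sub_add_cancel]
      linear_combination (norm := abel) e2
    have := hω (n1 - m) (n2 - m) h1 h2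
    have := congrArg (· + m) this
    simpa using this
  have hall : ∀ᵐ ω ∂μ, ∀ m : Zd d, ∀ n1 n2 : Zd d,
      n1 + (ω n1 : Zd d) = m → n2 + (ω n2 : Zd d) = m → n1 = n2 := ae_all_iff.2 hm
  filter_upwards [hsurj, hall] with ω hs hi
  refine ⟨?_, hs⟩
  intro n1 n2 h
  simp only at h
  exact hi (n2 + (ω n2 : Zd d)) n1 n2 h rfl
end
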